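/- arXiv:2511.08171 — 3 statements merged into one kernel-verified Lean document; each statement's English description precedes it below -/
import Mathlib

section
/- Let H be a real Hilbert space and G a real Hilbert space, T : H → G a bounded linear map, A : H → H' a bounded linear operator satisfying the coercivity m‖w‖² ≤ ⟨Aw, w⟩ and boundedness ⟨Aw, z⟩ ≤ M‖w‖‖z‖ for constants m, M > 0. Let α : G → G be a bounded, self-adjoint linear operator with (αp, p) ≥ α₀‖p‖² for some α₀ > 0. Then for every v ∈ G there exists a unique pair (w, p) ∈ H × G satisfying ⟨Aw, z⟩ − (p, Tz) = 0 for all z ∈ H and (Tw, q) + (αp, q) = (v, q) for all q ∈ G. -/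
open RealInnerProductSpace

/-- The real inner product as a continuous bilinear map. -/
noncomputable def innerCLM (F : Type*) [NormedAddCommGroup F] [InnerProductSpace ℝ F] :
    F →L[ℝ] F →L[ℝ] ℝ :=
  LinearMap.mkContinuous₂ (innerₗ F) 1 (fun x y => by
    simpa [one_mul] using abs_real_inner_le_norm x y)

@[simp] lemma innerCLM_apply {F : Type*} [NormedAddCommGroup F] [InnerProductSpace ℝ F]
    (x y : F) : innerCLM F x y = ⟪x, y⟫ := rfl

/-- Well-posedness of the regularized DtN saddle-point system (eqn (12)),
abstracted to Hilbert spaces. -/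
theorem stmt0
    {H G : Type*} [NormedAddCommGroup H] [InnerProductSpace ℝ H] [CompleteSpace H]
    [NormedAddCommGroup G] [InnerProductSpace ℝ G] [CompleteSpace G]
    (T : H →L[ℝ] G) (A : H →L[ℝ] StrongDual ℝ H)
    (m M : ℝ) (hm : 0 < m) (hM : 0 < M)
    (hcoer : ∀ w : H, m * ‖w‖ ^ 2 ≤ A w w)
    (hbdd : ∀ w z : H, A w z ≤ M * ‖w‖ * ‖z‖)
    (α : G →L[ℝ] G) (hαsa : ∀ p q : G, ⟪α p, q⟫ = ⟪p, α q⟫)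
    (α₀ : ℝ) (hα₀ : 0 < α₀) (hαpos : ∀ p : G, α₀ * ‖p‖ ^ 2 ≤ ⟪α p, p⟫) :
    ∀ v : G, ∃! wp : H × G,
      (∀ z : H, A wp.1 z - ⟪wp.2, T z⟫ = 0) ∧
      (∀ q : G, ⟪T wp.1, q⟫ + ⟪α wp.2, q⟫ = ⟪v, q⟫) := by
  intro v
  -- Work on the L² product space E := WithLp 2 (H × G).
  let E := WithLp 2 (H × G)
  let e : E ≃L[ℝ] H × G := WithLp.prodContinuousLinearEquiv 2 ℝ H G
  let π₁ : E →L[ℝ] H := (ContinuousLinearMap.fst ℝ H G).comp (e : E →L[ℝ] H × G)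
  let π₂ : E →L[ℝ] G := (ContinuousLinearMap.snd ℝ H G).comp (e : E →L[ℝ] H × G)
  -- the combined bilinear form
  let B : E →L[ℝ] E →L[ℝ] ℝ :=
    (A : H →L[ℝ] H →L[ℝ] ℝ).bilinearComp π₁ π₁
      - (innerCLM G).bilinearComp π₂ (T.comp π₁)
      + (innerCLM G).bilinearComp (T.comp π₁) π₂
      + ((innerCLM G).comp α).bilinearComp π₂ π₂
  have hBapp : ∀ (u z : E),
      B u z = A (π₁ u) (π₁ z) - ⟪π₂ u, T (π₁ z)⟫ + ⟪T (π₁ u), π₂ z⟫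
        + ⟪α (π₂ u), π₂ z⟫ := by
    intro u z
    simp [B, ContinuousLinearMap.bilinearComp_apply]
  have hcoerB : IsCoercive B := by
    refine ⟨min m α₀, lt_min hm hα₀, ?_⟩
    intro u
    have h1 : m * ‖π₁ u‖ ^ 2 ≤ A (π₁ u) (π₁ u) := hcoer _
    have h2 : α₀ * ‖π₂ u‖ ^ 2 ≤ ⟪α (π₂ u), π₂ u⟫ := hαpos _
    have hnorm : ‖u‖ ^ 2 = ‖π₁ u‖ ^ 2 + ‖π₂ u‖ ^ 2 := by
      exact WithLp.prod_norm_sq_eq_of_L2 u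
    have hBuu : B u u = A (π₁ u) (π₁ u) + ⟪α (π₂ u), π₂ u⟫ := by
      rw [hBapp, real_inner_comm (T (π₁ u)) (π₂ u)]; ring
    have hle : min m α₀ * ‖u‖ ^ 2 ≤ B u u := by
      rw [hBuu, hnorm]
      have e1 : min m α₀ * ‖π₁ u‖ ^ 2 ≤ m * ‖π₁ u‖ ^ 2 :=
        mul_le_mul_of_nonneg_right (min_le_left _ _) (by positivity)
      have e2 : min m α₀ * ‖π₂ u‖ ^ 2 ≤ α₀ * ‖π₂ u‖ ^ 2 :=
        mul_le_mul_of_nonneg_right (min_le_right _ _) (by positivity)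
      nlinarith
    calc min m α₀ * ‖u‖ * ‖u‖ = min m α₀ * ‖u‖ ^ 2 := by ring
    _ ≤ B u u := hle
  -- right-hand side
  let f : E := e.symm (0, v)
  have hf : ∀ z : E, ⟪f, z⟫ = ⟪v, π₂ z⟫ := by
    intro z
    rw [WithLp.prod_inner_apply]
    have h1 : f.ofLp.1 = (0 : H) := rfl
    have h2 : f.ofLp.2 = v := rfl
    have h3 : π₂ z = z.ofLp.2 := rfl
    rw [h1, h2, h3, inner_zero_left, zero_add]
  -- characterization of the system
  have hchar : ∀ wp : H × G,
      ((∀ z : H, A wp.1 z - ⟪wp.2, T z⟫ = 0) ∧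
       (∀ q : G, ⟪T wp.1, q⟫ + ⟪α wp.2, q⟫ = ⟪v, q⟫))
      ↔ (∀ z : E, B (e.symm wp) z = ⟪f, z⟫) := by
    intro wp
    have hπ1 : π₁ (e.symm wp) = wp.1 := by simp [π₁]
    have hπ2 : π₂ (e.symm wp) = wp.2 := by simp [π₂]
    constructor
    · rintro ⟨h1, h2⟩ z
      rw [hBapp, hf, hπ1, hπ2]
      have := h1 (π₁ z)
      have := h2 (π₂ z)
      linarith
    · intro h
      constructor
      · intro z
        have := h (e.symm (z, 0))
        rw [hBapp, hf, hπ1, hπ2] at this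
        simpa [π₁, π₂] using this
      · intro q
        have := h (e.symm (0, q))
        rw [hBapp, hf, hπ1, hπ2] at this
        simpa [π₁, π₂] using this
  -- Lax-Milgram
  let L := hcoerB.continuousLinearEquivOfBilin
  refine ⟨e (L.symm f), ?_, ?_⟩
  · refine (hchar (e (L.symm f))).mpr ?_
    intro z
    have he : (e.symm (e (L.symm f)) : E) = L.symm f := by simp
    rw [he, ← hcoerB.continuousLinearEquivOfBilin_apply (L.symm f) z]
    have : L (L.symm f) = f := L.apply_symm_apply f
    simp only [L] at this ⊢
    rw [this]
  · intro wp hwp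
    rw [hchar] at hwp
    have hfL : f = L (e.symm wp) := hcoerB.unique_continuousLinearEquivOfBilin
      (fun z => (hwp z).symm)
    have h2 : L.symm f = e.symm wp := by rw [hfL]; simp
    rw [h2]; simp
end

section
/- Under the assumptions of the regularized DtN system (A coercive with constant m > 0 and bounded on a Hilbert space H, T : H → G bounded, and α the multiplication operator by a function taking value α_d > 0 on a measurable set D and α_n > 0 on its complement N, in G = L²(Γ)), the unique solution p of the system ⟨Aw, z⟩ − (p, Tz)_{L²(Γ)} = 0 for all z and (Tw, q)_{L²(Γ)} + (α p, q)_{L²(Γ)} = (v, q)_{L²(Γ)} for all q satisfies the stability estimate α_d‖p‖²_{L²(D)} + α_n‖p‖²_{L²(N)} ≤ α_d⁻¹‖v‖²_{L²(D)} + α_n⁻¹‖v‖²_{L²(N)}. -/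
open RealInnerProductSpace MeasureTheory

lemma split_integral {Γ : Type*} [MeasurableSpace Γ] {μ : Measure Γ}
    {D : Set Γ} (hD : MeasurableSet D) (a b : ℝ) {f : Γ → ℝ}
    (hf : Integrable (fun x => (Set.indicator D (fun _ => a) x + Set.indicator Dᶜ (fun _ => b) x) * f x ^ 2) μ) :
    ∫ x, (Set.indicator D (fun _ => a) x + Set.indicator Dᶜ (fun _ => b) x) * f x ^ 2 ∂μ
      = a * ∫ x in D, f x ^ 2 ∂μ + b * ∫ x in Dᶜ, f x ^ 2 ∂μ := by
  rw [← integral_add_compl hD hf]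
  congr 1
  · rw [setIntegral_congr_fun hD (g := fun x => a * f x ^ 2), integral_const_mul]
    intro x hx
    simp [Set.indicator_of_mem hx, Set.indicator_of_notMem (by simpa using hx : x ∉ Dᶜ)]
  · rw [setIntegral_congr_fun hD.compl (g := fun x => b * f x ^ 2), integral_const_mul]
    intro x hx
    simp [Set.indicator_of_mem hx, Set.indicator_of_notMem (show x ∉ D by simpa using hx)]

/-- Lemma 4.1: stability estimate for the heterogeneously regularized
Dirichlet-to-Neumann saddle-point system with G = L²(Γ). -/
theorem stmt1
    {H : Type*} [NormedAddCommGroup H] [InnerProductSpace ℝ H] [CompleteSpace H]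
    {Γ : Type*} [MeasurableSpace Γ] (μ : Measure Γ)
    (A : H →L[ℝ] StrongDual ℝ H) (m M : ℝ) (hm : 0 < m) (hM : 0 < M)
    (hcoer : ∀ w : H, m * ‖w‖ ^ 2 ≤ A w w)
    (hbdd : ∀ w z : H, A w z ≤ M * ‖w‖ * ‖z‖)
    (T : H →L[ℝ] Lp ℝ 2 μ)
    (D : Set Γ) (hD : MeasurableSet D)
    (αd αn : ℝ) (hαd : 0 < αd) (hαn : 0 < αn)
    (α : Lp ℝ 2 μ →L[ℝ] Lp ℝ 2 μ)
    (hα : ∀ f : Lp ℝ 2 μ, (α f : Γ → ℝ) =ᵐ[μ] fun x => (Set.indicator D (fun _ => αd) x + Set.indicator Dᶜ (fun _ => αn) x) * f x)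
    (v : Lp ℝ 2 μ) (w : H) (p : Lp ℝ 2 μ)
    (h1 : ∀ z : H, A w z - ⟪p, T z⟫ = 0)
    (h2 : ∀ q : Lp ℝ 2 μ, ⟪T w, q⟫ + ⟪α p, q⟫ = ⟪v, q⟫) :
    αd * ∫ x in D, (p x) ^ 2 ∂μ + αn * ∫ x in Dᶜ, (p x) ^ 2 ∂μ ≤
      αd⁻¹ * ∫ x in D, (v x) ^ 2 ∂μ + αn⁻¹ * ∫ x in Dᶜ, (v x) ^ 2 ∂μ := by
  set c : Γ → ℝ := fun x => Set.indicator D (fun _ => αd) x + Set.indicator Dᶜ (fun _ => αn) x with hc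
  -- basic properties of c
  have hcval : ∀ x, (x ∈ D ∧ c x = αd) ∨ (x ∉ D ∧ c x = αn) := by
    intro x
    by_cases hx : x ∈ D
    · exact Or.inl ⟨hx, by simp [hc, Set.indicator_of_mem hx,
        Set.indicator_of_notMem (by simpa using hx : x ∉ Dᶜ)]⟩
    · exact Or.inr ⟨hx, by simp [hc, Set.indicator_of_notMem hx,
        Set.indicator_of_mem (by simpa using hx : x ∈ Dᶜ)]⟩
  have hcpos : ∀ x, 0 < c x := by
    intro x; rcases hcval x with ⟨_, h⟩ | ⟨_, h⟩ <;> rw [h] <;> assumption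
  have hcbd : ∀ x, ‖c x‖ ≤ max αd αn := by
    intro x
    rcases hcval x with ⟨_, h⟩ | ⟨_, h⟩ <;> rw [h, Real.norm_eq_abs, abs_of_pos (by assumption)]
    exacts [le_max_left _ _, le_max_right _ _]
  have hcibd : ∀ x, ‖(c x)⁻¹‖ ≤ max αd⁻¹ αn⁻¹ := by
    intro x
    rcases hcval x with ⟨_, h⟩ | ⟨_, h⟩ <;>
      rw [h, Real.norm_eq_abs, abs_of_pos (by positivity)]
    exacts [le_max_left _ _, le_max_right _ _]
  have hcmeas : Measurable c := by
    exact (measurable_const.indicator hD).add (measurable_const.indicator hD.compl)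
  -- integrability
  have hp2 : Integrable (fun x => (p : Γ → ℝ) x ^ 2) μ := (Lp.memLp p).integrable_sq
  have hv2 : Integrable (fun x => (v : Γ → ℝ) x ^ 2) μ := (Lp.memLp v).integrable_sq
  have hcp2 : Integrable (fun x => c x * (p : Γ → ℝ) x ^ 2) μ :=
    hp2.bdd_mul hcmeas.aestronglyMeasurable (Filter.Eventually.of_forall hcbd)
  have hcv2 : Integrable (fun x => (c x)⁻¹ * (v : Γ → ℝ) x ^ 2) μ :=
    hv2.bdd_mul (hcmeas.inv).aestronglyMeasurable (Filter.Eventually.of_forall hcibd)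
  have hvp : Integrable (fun x => (v : Γ → ℝ) x * (p : Γ → ℝ) x) μ := by
    have := L2.integrable_inner (𝕜 := ℝ) v p
    simpa [RCLike.inner_apply, mul_comm] using this
  -- key inequality ⟪α p, p⟫ ≤ ⟪v, p⟫
  have hAww : (0:ℝ) ≤ A w w := le_trans (by positivity) (hcoer w)
  have hTwp : ⟪T w, p⟫ = A w w := by
    have := h1 w
    rw [real_inner_comm]; linarith
  have hkey : ⟪α p, p⟫ ≤ ⟪v, p⟫ := by
    have := h2 p
    linarith
  -- express inner products as integrals
  have hαpp : ⟪α p, p⟫ = ∫ x, c x * (p : Γ → ℝ) x ^ 2 ∂μ := by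
    rw [L2.inner_def]
    refine integral_congr_ae ((hα p).mono fun x hx => ?_)
    simp only [RCLike.inner_apply, starRingEnd_apply, star_trivial]
    rw [hx]; ring
  have hvpint : ⟪v, p⟫ = ∫ x, (v : Γ → ℝ) x * (p : Γ → ℝ) x ∂μ := by
    rw [L2.inner_def]
    simp [RCLike.inner_apply, mul_comm]
  -- pointwise AM-GM
  have hptw : ∀ x, (v : Γ → ℝ) x * (p : Γ → ℝ) x ≤
      (c x)⁻¹ / 2 * (v : Γ → ℝ) x ^ 2 + c x / 2 * (p : Γ → ℝ) x ^ 2 := by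
    intro x
    have h0 := hcpos x
    have hid : (c x)⁻¹ / 2 * (v : Γ → ℝ) x ^ 2 + c x / 2 * (p : Γ → ℝ) x ^ 2
        - (v : Γ → ℝ) x * (p : Γ → ℝ) x
        = ((v : Γ → ℝ) x - c x * (p : Γ → ℝ) x) ^ 2 / (2 * c x) := by
      field_simp
      ring
    have hnn : (0:ℝ) ≤ ((v : Γ → ℝ) x - c x * (p : Γ → ℝ) x) ^ 2 / (2 * c x) :=
      div_nonneg (sq_nonneg _) (by positivity)
    linarith [hid ▸ hnn]
  have hint : ∫ x, (v : Γ → ℝ) x * (p : Γ → ℝ) x ∂μ ≤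
      ∫ x, ((c x)⁻¹ / 2 * (v : Γ → ℝ) x ^ 2 + c x / 2 * (p : Γ → ℝ) x ^ 2) ∂μ := by
    refine integral_mono hvp ?_ hptw
    exact ((hcv2.div_const 2).add (hcp2.div_const 2)).congr
      (Filter.Eventually.of_forall fun x => by simp [Pi.add_apply]; ring)
  have hintsum : ∫ x, ((c x)⁻¹ / 2 * (v : Γ → ℝ) x ^ 2 + c x / 2 * (p : Γ → ℝ) x ^ 2) ∂μ
      = (∫ x, (c x)⁻¹ * (v : Γ → ℝ) x ^ 2 ∂μ) / 2 + (∫ x, c x * (p : Γ → ℝ) x ^ 2 ∂μ) / 2 := by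
    rw [integral_add (by simpa [div_mul_eq_mul_div] using hcv2.div_const 2)
      (by simpa [div_mul_eq_mul_div] using hcp2.div_const 2)]
    rw [← integral_div, ← integral_div]
    congr 1 <;> exact integral_congr_ae (Filter.Eventually.of_forall fun x => by ring)
  -- conclude ∫ c p² ≤ ∫ c⁻¹ v²
  have hmain : ∫ x, c x * (p : Γ → ℝ) x ^ 2 ∂μ ≤ ∫ x, (c x)⁻¹ * (v : Γ → ℝ) x ^ 2 ∂μ := by
    rw [hαpp, hvpint] at hkey
    rw [hintsum] at hint
    linarith
  -- split the integrals
  have hsplit1 := split_integral hD αd αn (f := (p : Γ → ℝ)) hcp2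
  have hcinv : ∀ x, (c x)⁻¹ = Set.indicator D (fun _ => αd⁻¹) x + Set.indicator Dᶜ (fun _ => αn⁻¹) x := by
    intro x
    rcases hcval x with ⟨hx, h⟩ | ⟨hx, h⟩
    · simp [h, Set.indicator_of_mem hx, Set.indicator_of_notMem (by simpa using hx : x ∉ Dᶜ)]
    · simp [h, Set.indicator_of_notMem hx, Set.indicator_of_mem (by simpa using hx : x ∈ Dᶜ)]
  have hsplit2 : ∫ x, (c x)⁻¹ * (v : Γ → ℝ) x ^ 2 ∂μ
      = αd⁻¹ * ∫ x in D, (v : Γ → ℝ) x ^ 2 ∂μ + αn⁻¹ * ∫ x in Dᶜ, (v : Γ → ℝ) x ^ 2 ∂μ := by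
    have := split_integral hD αd⁻¹ αn⁻¹ (f := (v : Γ → ℝ))
      (by refine hcv2.congr (Filter.Eventually.of_forall fun x => ?_); simp only [hcinv])
    rw [← this]
    exact integral_congr_ae (Filter.Eventually.of_forall fun x => by simp only [hcinv])
  rw [← hsplit1, ← hsplit2]
  exact hmain
end

section
/- Let G be a real Hilbert space, A : H → H' coercive and bounded on a Hilbert space H, T : H → G bounded, and α a positive self-adjoint bounded operator on G. Let Λ : G → G denote the regularized DtN map sending v to the p-component of the solution of the saddle-point system ⟨Aw, z⟩ − (p, Tz) = 0, (Tw, q) + (αp, q) = (v, q). Let Λ* be defined analogously with A replaced by its adjoint A* and appropriate sign changes: ⟨A*w₂, z⟩ + (p₂, Tz) = 0, −(Tw₂, q) + (αp₂, q) = (p₁, q). Then Λ* is the Hilbert-space adjoint of Λ: (Λ* p₁, v)_G = (p₁, Λ v)_G for all p₁, v ∈ G. -/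
open RealInnerProductSpace

/-- The sign-flipped saddle-point system defines the Hilbert-space adjoint of
the regularized DtN map: (Λ* p₁, v) = (p₁, Λ v). -/
theorem stmt16
    {H G : Type*} [NormedAddCommGroup H] [InnerProductSpace ℝ H] [CompleteSpace H]
    [NormedAddCommGroup G] [InnerProductSpace ℝ G] [CompleteSpace G]
    (A : H →L[ℝ] StrongDual ℝ H) (m M : ℝ) (hm : 0 < m) (hM : 0 < M)
    (hcoer : ∀ w : H, m * ‖w‖ ^ 2 ≤ A w w)
    (hbdd : ∀ w z : H, A w z ≤ M * ‖w‖ * ‖z‖)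
    (T : H →L[ℝ] G)
    (α : G →L[ℝ] G) (hαsa : ∀ p q : G, ⟪α p, q⟫ = ⟪p, α q⟫)
    (hαpos : ∀ p : G, p ≠ 0 → 0 < ⟪α p, p⟫)
    (v p₁ : G) (w : H) (p : G) (w₂ : H) (p₂ : G)
    (hsys1a : ∀ z : H, A w z - ⟪p, T z⟫ = 0)
    (hsys1b : ∀ q : G, ⟪T w, q⟫ + ⟪α p, q⟫ = ⟪v, q⟫)
    (hsys2a : ∀ z : H, A z w₂ + ⟪p₂, T z⟫ = 0)
    (hsys2b : ∀ q : G, -⟪T w₂, q⟫ + ⟪α p₂, q⟫ = ⟪p₁, q⟫) :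
    ⟪p₂, v⟫ = ⟪p₁, p⟫ := by
  have h1 := hsys1a w₂
  have h2 := hsys1b p₂
  have h3 := hsys2a w
  have h4 := hsys2b p
  have c1 : ⟪p₂, v⟫ = ⟪v, p₂⟫ := real_inner_comm _ _
  have c2 : ⟪T w, p₂⟫ = ⟪p₂, T w⟫ := real_inner_comm _ _
  have c3 : ⟪α p, p₂⟫ = ⟪α p₂, p⟫ := by rw [hαsa, real_inner_comm]
  have c4 : ⟪p, T w₂⟫ = ⟪T w₂, p⟫ := real_inner_comm _ _
  linarith
end
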